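/- arXiv:1806.07648 — 4 statements merged into one kernel-verified Lean document; each statement's English description precedes it below -/
import Mathlib

section
/- For every n ≥ 1, all complex roots of the polynomial t ↦ binom((n+1)·t + n, n) have real part lying in the closed interval [-1 + 1/(n+1), -1/(n+1)]; that is, projective n-space polarised by its anticanonical bundle satisfies the narrow canonical strip hypothesis. -/
open Polynomial

/-- The Hilbert polynomial of ℙⁿ with respect to its anticanonical bundle,
`binom((n+1)t + n, n) = ∏_{i=1}^{n} ((n+1)t + i) / n!`, as a complex polynomial. -/
noncomputable def hilbertPn (n : ℕ) : Polynomial ℂ :=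
  C ((n.factorial : ℂ)⁻¹) *
    ∏ i ∈ Finset.range n, (C ((n : ℂ) + 1) * X + C ((i : ℂ) + 1))

theorem projective_space_narrow_canonical_strip (n : ℕ) (hn : 1 ≤ n) :
    ∀ z : ℂ, (hilbertPn n).eval z = 0 →
      z.re ∈ Set.Icc (-1 + 1 / ((n : ℝ) + 1)) (-1 / ((n : ℝ) + 1)) := by
  intro z hz
  have hfac : ((n.factorial : ℂ))⁻¹ ≠ 0 := by
    simp [Nat.factorial_ne_zero]
  simp only [hilbertPn, eval_mul, eval_C, eval_prod, eval_add, eval_mul, eval_X,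
    mul_eq_zero, hfac, false_or, Finset.prod_eq_zero_iff] at hz
  obtain ⟨i, hi, hzi⟩ := hz
  have hnpos : (0 : ℝ) < (n : ℝ) + 1 := by positivity
  have hn1 : ((n : ℂ) + 1) ≠ 0 := by
    have := Nat.cast_add_one_ne_zero (R := ℂ) n
    push_cast at this
    exact this
  have hznum : z = ((-(((i : ℝ) + 1) / ((n : ℝ) + 1)) : ℝ) : ℂ) := by
    push_cast
    field_simp
    linear_combination hzi
  have hre : z.re = -(((i : ℝ) + 1) / ((n : ℝ) + 1)) := by
    rw [hznum, Complex.ofReal_re]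
  rw [hre]
  have hiN : (i : ℝ) + 1 ≤ (n : ℝ) := by
    exact_mod_cast Nat.succ_le_of_lt (Finset.mem_range.mp hi)
  constructor
  · have h1 : (-1 : ℝ) + 1 / ((n : ℝ) + 1) = -((n : ℝ) / ((n : ℝ) + 1)) := by
      field_simp
      ring
    rw [h1, neg_le_neg_iff]
    gcongr
  · rw [neg_div, neg_le_neg_iff]
    gcongr
    linarith
end

section
/- For every natural number k, the trigonometric identity ∑_{j=1}^{2k+1} (-1)^{j-1} / sin²(jπ/(2k+2)) = (2k² + 4k + 3)/3 holds. -/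
open Real Finset Complex

lemma sumId (m : ℕ) : ∑ i ∈ range m, (i:ℂ) * 2 = (m:ℂ) * ((m:ℂ) - 1) := by
  induction m with
  | zero => simp
  | succ m ih => rw [sum_range_succ]; push_cast; linear_combination ih

lemma sumSq (m : ℕ) : ∑ i ∈ range m, (i:ℂ)^2 * 6 = (m:ℂ) * ((m:ℂ) - 1) * (2*(m:ℂ) - 1) := by
  induction m with
  | zero => simp
  | succ m ih => rw [sum_range_succ]; push_cast; linear_combination ih

lemma key_poly (z : ℂ) (n : ℕ) :
    (z - 1) * ∑ i ∈ range n, (i : ℂ) * z ^ i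
      = ((n:ℂ) - 1) * z ^ n - ∑ i ∈ range n, z ^ i + 1 := by
  induction n with
  | zero => simp
  | succ n ih =>
      rw [sum_range_succ, sum_range_succ]
      push_cast
      linear_combination ih

lemma rootsum (n : ℕ) (hn : 0 < n) (m : ℕ) :
    ∑ j ∈ range n, (Complex.exp (2*π*Complex.I/n)) ^ (j * m)
      = if (n:ℤ) ∣ m then (n:ℂ) else 0 := by
  have hne : (n:ℂ) ≠ 0 := Nat.cast_ne_zero.mpr hn.ne'
  have hw : ∀ j : ℕ, (Complex.exp (2*π*Complex.I/n)) ^ (j*m)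
      = (Complex.exp (2*π*Complex.I*m/n)) ^ j := by
    intro j
    rw [← Complex.exp_nat_mul, ← Complex.exp_nat_mul]
    congr 1
    push_cast
    ring
  simp only [hw]
  by_cases hd : (n:ℤ) ∣ m
  · obtain ⟨c, hc⟩ := hd
    have hmc : (m:ℂ) = (n:ℂ) * c := by exact_mod_cast hc
    have h1 : Complex.exp (2*π*Complex.I*m/n) = 1 := by
      have : (2*π*Complex.I*m/n : ℂ) = c * (2*π*Complex.I) := by
        rw [hmc, eq_comm, eq_div_iff hne]
        ring
      rw [this, Complex.exp_int_mul_two_pi_mul_I]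
    rw [if_pos ⟨c, hc⟩]
    simp [h1]
  · have hπ : (π:ℂ) ≠ 0 := by exact_mod_cast Real.pi_ne_zero
    have h1 : Complex.exp (2*π*Complex.I*m/n) ≠ 1 := by
      intro h
      rw [Complex.exp_eq_one_iff] at h
      obtain ⟨c, hc⟩ := h
      apply hd
      refine ⟨c, ?_⟩
      have h2πI : (2*π*Complex.I : ℂ) ≠ 0 := by
        apply mul_ne_zero (mul_ne_zero two_ne_zero hπ) Complex.I_ne_zero
      have hmc : (m:ℂ) = (n:ℂ) * c := by
        field_simp at hc
        linear_combination hc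
      exact_mod_cast hmc
    have h2 : (Complex.exp (2*π*Complex.I*m/n)) ^ n = 1 := by
      rw [← Complex.exp_nat_mul]
      have : (n:ℂ) * (2*π*Complex.I*m/n) = (m:ℤ) * (2*π*Complex.I) := by
        push_cast; field_simp
      rw [this]
      exact Complex.exp_int_mul_two_pi_mul_I m
    rw [geom_sum_eq h1, h2]
    simp [hd]

lemma divComp (k i i' : ℕ) (hi : i < 2*k+2) (hi' : i' < 2*k+2) :
    ((2*k+2 : ℕ) : ℤ) ∣ ((i+i'+k+2 : ℕ) : ℤ) ↔ i' = (if i ≤ k then k - i else 3*k+2-i) := by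
  rw [Int.natCast_dvd_natCast]
  constructor
  · rintro ⟨m, hm⟩
    rcases m with _|_|_|m
    · omega
    · split <;> omega
    · split <;> omega
    · exfalso
      have h6 : (2*k+2)*3 ≤ (2*k+2)*(m+1+1+1) := Nat.mul_le_mul_left _ (by omega)
      rw [← hm] at h6
      omega
  · intro h
    by_cases hik : i ≤ k
    · rw [if_pos hik] at h
      exact ⟨1, by omega⟩
    · rw [if_neg hik] at h
      exact ⟨2, by omega⟩


lemma sumLin (m : ℕ) (a : ℂ) :
    (∑ i ∈ range m, (i:ℂ) * (a - (i:ℂ))) * 6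
      = 3*a*(m:ℂ)*((m:ℂ)-1) - (m:ℂ)*((m:ℂ)-1)*(2*(m:ℂ)-1) := by
  induction m with
  | zero => simp
  | succ m ih => rw [sum_range_succ]; push_cast; linear_combination ih

lemma sin_sq_key (z w : ℂ) (h : (Complex.exp (z*Complex.I))^2 = w) :
    (Complex.sin z)^2 * (4*w) = -((w - 1))^2 := by
  set u : ℂ := Complex.exp (z * Complex.I) with hu
  have hu0 : u ≠ 0 := Complex.exp_ne_zero _
  have e1 : u = Complex.cos z + Complex.sin z * Complex.I := by
    rw [hu, Complex.exp_mul_I]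
  have e2 : u⁻¹ = Complex.cos z - Complex.sin z * Complex.I := by
    rw [hu, ← Complex.exp_neg]
    have hne : -(z*Complex.I) = (-z)*Complex.I := by ring
    rw [hne, Complex.exp_mul_I, Complex.sin_neg, Complex.cos_neg]
    ring
  have hdiff : u - u⁻¹ = 2 * Complex.sin z * Complex.I := by
    nth_rewrite 1 [e1]
    rw [e2]
    ring
  have hdiff2 : u^2 - 1 = 2*Complex.sin z*Complex.I*u := by
    have h2 := congrArg (· * u) hdiff
    linear_combination h2 + inv_mul_cancel₀ hu0
  rw [← h]
  linear_combination (u^2 - 1 + 2*Complex.sin z*Complex.I*u) * hdiff2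
    + 4*(Complex.sin z)^2*u^2*Complex.I_sq

lemma term_eval (N w s a : ℂ) (hN : N ≠ 0) (hw0 : w ≠ 0) (hw1 : w ≠ 1)
    (hkey : s^2*(4*w) = -((w - 1))^2) (hs : s ≠ 0) (hAval : (w - 1)*a = N)
    (j : ℕ) (hj : 1 ≤ j) :
    (-1:ℂ)^(j-1) / s^2 = 4/N^2 * ((-1:ℂ)^j * w * a^2) := by
  have hw1' : w - 1 ≠ 0 := sub_ne_zero.mpr hw1
  have hjodd : (-1:ℂ)^j = -(-1:ℂ)^(j-1) := by
    conv_lhs => rw [show j = (j-1)+1 by omega]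
    rw [pow_succ]
    ring
  rw [hjodd]
  have ha : a = N/(w-1) := by
    rw [eq_div_iff hw1']
    linear_combination hAval
  have hs2 : s^2 = -((w-1))^2/(4*w) := by
    rw [eq_div_iff (by exact mul_ne_zero (by norm_num) hw0)]
    linear_combination hkey
  rw [ha, hs2]
  field_simp

lemma main_complex (k : ℕ) :
    ∑ j ∈ Icc 1 (2*k+1),
        (-1:ℂ)^(j-1) / (Complex.sin ((j:ℂ) * (π:ℂ) / (2*(k:ℂ)+2)))^2
      = (2*(k:ℂ)^2 + 4*(k:ℂ) + 3)/3 := by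
  have hπ : (π:ℂ) ≠ 0 := by exact_mod_cast Real.pi_ne_zero
  set n : ℕ := 2*k+2 with hn
  have hN0 : ((n:ℕ):ℂ) ≠ 0 := Nat.cast_ne_zero.mpr (by omega)
  have hNval : ((n:ℕ):ℂ) = 2*(k:ℂ)+2 := by push_cast [hn]; ring
  set ζ : ℂ := Complex.exp (2*π*Complex.I/(n:ℂ)) with hζ
  set A : ℕ → ℂ := fun j => ∑ i ∈ range n, (i:ℂ) * (ζ^j)^i with hA
  have hζn : ζ^n = 1 := by
    rw [← Complex.exp_nat_mul]
    have : (n:ℂ) * (2*π*Complex.I/(n:ℂ)) = (1:ℤ) * (2*π*Complex.I) := by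
      field_simp
      norm_num
    rw [this, Complex.exp_int_mul_two_pi_mul_I]
  have h2k : (2*(k:ℂ)+2) ≠ 0 := by rw [← hNval]; exact hN0
  have hζk1 : ζ^(k+1) = -1 := by
    rw [← Complex.exp_nat_mul]
    have harg : ((k+1:ℕ):ℂ) * (2*π*Complex.I/(n:ℂ)) = π*Complex.I := by
      rw [hNval]
      push_cast
      field_simp
    rw [harg, Complex.exp_pi_mul_I]
  -- per-term identity
  have hterm : ∀ j ∈ Icc 1 (2*k+1),
      (-1:ℂ)^(j-1) / (Complex.sin ((j:ℂ) * (π:ℂ) / (2*(k:ℂ)+2)))^2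
        = (4/((n:ℕ):ℂ)^2) * ((-1:ℂ)^j * ζ^j * (A j)^2) := by
    intro j hj
    obtain ⟨hj1, hj2⟩ := Finset.mem_Icc.mp hj
    have hw0 : ζ^j ≠ 0 := pow_ne_zero _ (Complex.exp_ne_zero _)
    have hu2 : (Complex.exp (((j:ℂ) * (π:ℂ) / (2*(k:ℂ)+2)) * Complex.I))^2 = ζ^j := by
      rw [hζ, ← Complex.exp_nat_mul, ← Complex.exp_nat_mul]
      congr 1
      rw [hNval]
      push_cast
      field_simp
    have hkey := sin_sq_key ((j:ℂ) * (π:ℂ) / (2*(k:ℂ)+2)) (ζ^j) hu2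
    have hsin0 : Complex.sin ((j:ℂ) * (π:ℂ) / (2*(k:ℂ)+2)) ≠ 0 := by
      have hzr : (j:ℂ) * (π:ℂ) / (2*(k:ℂ)+2) = (((j:ℝ) * π / (2*(k:ℝ)+2) : ℝ) : ℂ) := by
        push_cast
        ring
      rw [hzr, ← Complex.ofReal_sin]
      simp only [ne_eq, Complex.ofReal_eq_zero]
      have hjp : (0:ℝ) < (j:ℝ) := by exact_mod_cast hj1
      have hdp : (0:ℝ) < 2*(k:ℝ)+2 := by positivity
      have h1 : 0 < (j:ℝ) * π / (2*(k:ℝ)+2) := by positivity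
      have h2 : (j:ℝ) * π / (2*(k:ℝ)+2) < π := by
        rw [div_lt_iff₀ hdp]
        have hjlt : (j:ℝ) < 2*(k:ℝ)+2 := by
          have h3 : (j:ℝ) < ((2*k+2 : ℕ):ℝ) := by exact_mod_cast (by omega : j < 2*k+2)
          push_cast at h3
          linarith
        nlinarith [Real.pi_pos]
      exact ne_of_gt (Real.sin_pos_of_pos_of_lt_pi h1 h2)
    have hw1 : ζ^j ≠ 1 := by
      intro h
      rw [h] at hkey
      simp at hkey
      exact hsin0 hkey
    have hwn : (ζ^j) ^ n = 1 := by rw [← pow_mul, mul_comm, pow_mul, hζn, one_pow]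
    have hAval : (ζ^j - 1) * A j = ((n:ℕ):ℂ) := by
      have hk2 := key_poly (ζ^j) n
      have hgeom : ∑ i ∈ range n, (ζ^j)^i = 0 := by
        rw [geom_sum_eq hw1, hwn]
        simp
      rw [hA]
      simp only
      rw [hk2, hwn, hgeom]
      ring
    exact term_eval ((n:ℕ):ℂ) (ζ^j) _ (A j) hN0 hw0 hw1 hkey hsin0 hAval j hj1
  -- split range sum
  have hsplit : ∑ j ∈ range n, ((-1:ℂ)^j * ζ^j * (A j)^2)
      = (-1:ℂ)^0 * ζ^0 * (A 0)^2 + ∑ j ∈ Icc 1 (2*k+1), ((-1:ℂ)^j * ζ^j * (A j)^2) := by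
    rw [Finset.range_eq_Ico, Finset.sum_eq_sum_Ico_succ_bot (by omega : 0 < n)]
    congr 1
  have hg0 : (-1:ℂ)^0 * ζ^0 * (A 0)^2 = ((((n:ℕ):ℂ)) * (((n:ℕ):ℂ)-1)/2)^2 := by
    have hs1 : ∑ i ∈ range n, (i:ℂ) = ((n:ℕ):ℂ)*(((n:ℕ):ℂ)-1)/2 := by
      have h6 := sumId n
      rw [← Finset.sum_mul] at h6
      linear_combination h6/2
    simp only [pow_zero, one_mul, hA]
    simp only [one_pow, mul_one]
    rw [hs1]
  have hgj : ∀ j : ℕ, (-1:ℂ)^j * ζ^j * (A j)^2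
      = ∑ i ∈ range n, ∑ i' ∈ range n, (i:ℂ)*(i':ℂ) * ζ^(j*(i+i'+k+2)) := by
    intro j
    rw [← hζk1, ← pow_mul, pow_two, hA]
    simp only
    rw [Finset.sum_mul_sum, Finset.mul_sum]
    refine Finset.sum_congr rfl fun i _ => ?_
    rw [Finset.mul_sum]
    refine Finset.sum_congr rfl fun i' _ => ?_
    rw [← pow_mul, ← pow_mul,
      show j*(i+i'+k+2) = (k+1)*j + j + (j*i + j*i') from by ring, pow_add, pow_add]
    ring
  have hTotal : ∑ j ∈ range n, ((-1:ℂ)^j * ζ^j * (A j)^2)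
      = (∑ i ∈ range n, (i:ℂ) * (((if i ≤ k then k - i else 3*k+2-i : ℕ)):ℂ)) * ((n:ℕ):ℂ) := by
    calc ∑ j ∈ range n, ((-1:ℂ)^j * ζ^j * (A j)^2)
        = ∑ j ∈ range n, ∑ i ∈ range n, ∑ i' ∈ range n, (i:ℂ)*(i':ℂ) * ζ^(j*(i+i'+k+2)) :=
          Finset.sum_congr rfl fun j _ => hgj j
      _ = ∑ i ∈ range n, ∑ i' ∈ range n, ∑ j ∈ range n, (i:ℂ)*(i':ℂ) * ζ^(j*(i+i'+k+2)) := by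
          rw [Finset.sum_comm]
          exact Finset.sum_congr rfl fun i _ => Finset.sum_comm
      _ = ∑ i ∈ range n, ∑ i' ∈ range n, (i:ℂ)*(i':ℂ)
            * (if ((n:ℕ):ℤ) ∣ ((i+i'+k+2 : ℕ):ℤ) then ((n:ℕ):ℂ) else 0) := by
          refine Finset.sum_congr rfl fun i _ => Finset.sum_congr rfl fun i' _ => ?_
          rw [← Finset.mul_sum, rootsum n (by omega) (i+i'+k+2)]
      _ = ∑ i ∈ range n, (i:ℂ) * (((if i ≤ k then k - i else 3*k+2-i : ℕ)):ℂ) * ((n:ℕ):ℂ) := by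
          refine Finset.sum_congr rfl fun i hi => ?_
          have hi' : i < 2*k+2 := by have := Finset.mem_range.mp hi; omega
          rw [Finset.sum_eq_single (if i ≤ k then k - i else 3*k+2-i)
              (fun b hb hbne => by
                rw [if_neg (fun h => hbne ((divComp k i b hi'
                  (by have := Finset.mem_range.mp hb; omega)).mp h)), mul_zero])
              (fun hnot => absurd (Finset.mem_range.mpr (by split <;> omega)) hnot)]
          rw [if_pos ((divComp k i _ hi' (by split <;> omega)).mpr rfl)]
      _ = (∑ i ∈ range n, (i:ℂ) * (((if i ≤ k then k - i else 3*k+2-i : ℕ)):ℂ)) * ((n:ℕ):ℂ) := by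
          rw [← Finset.sum_mul]
  have hC : (∑ i ∈ range n, (i:ℂ) * (((if i ≤ k then k - i else 3*k+2-i : ℕ)):ℂ)) * 6
      = 14*(k:ℂ)^3 + 30*(k:ℂ)^2 + 22*(k:ℂ) + 6 := by
    have hsplit2 : ∑ i ∈ range n, (i:ℂ) * (((if i ≤ k then k - i else 3*k+2-i : ℕ)):ℂ)
        = (∑ i ∈ range (k+1), (i:ℂ) * ((k:ℂ) - (i:ℂ)))
          + ((∑ i ∈ range n, (i:ℂ) * ((3*(k:ℂ)+2) - (i:ℂ)))
             - (∑ i ∈ range (k+1), (i:ℂ) * ((3*(k:ℂ)+2) - (i:ℂ)))) := by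
      rw [Finset.range_eq_Ico,
        ← Finset.sum_Ico_consecutive _ (Nat.zero_le (k+1)) (by omega : k+1 ≤ n)]
      congr 1
      · rw [← Finset.range_eq_Ico]
        refine Finset.sum_congr rfl fun i hi => ?_
        have hik : i ≤ k := by have := Finset.mem_range.mp hi; omega
        rw [if_pos hik, Nat.cast_sub hik]
      · rw [show ∑ i ∈ Ico (k+1) n, (i:ℂ) * (((if i ≤ k then k - i else 3*k+2-i : ℕ)):ℂ)
            = ∑ i ∈ Ico (k+1) n, (i:ℂ) * ((3*(k:ℂ)+2) - (i:ℂ)) from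
            Finset.sum_congr rfl fun i hi => by
              have h1 := (Finset.mem_Ico.mp hi).1
              have h2 := (Finset.mem_Ico.mp hi).2
              rw [if_neg (by omega), Nat.cast_sub (by omega)]
              push_cast
              ring]
        rw [Finset.sum_Ico_eq_sub _ (by omega : k+1 ≤ n)]
        simp only [← Finset.range_eq_Ico]
    rw [hsplit2]
    have e1 := sumLin (k+1) ((k:ℂ))
    have e2 := sumLin n (3*(k:ℂ)+2)
    have e3 := sumLin (k+1) (3*(k:ℂ)+2)
    push_cast [hn] at e1 e2 e3
    linear_combination e1 + e2 - e3
  -- final assembly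
  calc ∑ j ∈ Icc 1 (2*k+1),
        (-1:ℂ)^(j-1) / (Complex.sin ((j:ℂ) * (π:ℂ) / (2*(k:ℂ)+2)))^2
      = ∑ j ∈ Icc 1 (2*k+1), (4/((n:ℕ):ℂ)^2) * ((-1:ℂ)^j * ζ^j * (A j)^2) :=
        Finset.sum_congr rfl hterm
    _ = (4/((n:ℕ):ℂ)^2) * ∑ j ∈ Icc 1 (2*k+1), ((-1:ℂ)^j * ζ^j * (A j)^2) := by
        rw [Finset.mul_sum]
    _ = (4/((n:ℕ):ℂ)^2) *
          ((∑ i ∈ range n, (i:ℂ) * (((if i ≤ k then k - i else 3*k+2-i : ℕ)):ℂ)) * ((n:ℕ):ℂ)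
            - ((((n:ℕ):ℂ)) * (((n:ℕ):ℂ)-1)/2)^2) := by
        have h7 : ∑ j ∈ Icc 1 (2*k+1), ((-1:ℂ)^j * ζ^j * (A j)^2)
            = ∑ j ∈ range n, ((-1:ℂ)^j * ζ^j * (A j)^2) - (-1:ℂ)^0 * ζ^0 * (A 0)^2 := by
          rw [hsplit]
          ring
        rw [h7, hTotal, hg0]
    _ = (2*(k:ℂ)^2 + 4*(k:ℂ) + 3)/3 := by
        have hCS : (∑ i ∈ range n, (i:ℂ) * (((if i ≤ k then k - i else 3*k+2-i : ℕ)):ℂ))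
            = (14*(k:ℂ)^3 + 30*(k:ℂ)^2 + 22*(k:ℂ) + 6)/6 := by
          linear_combination hC/6
        rw [hCS, hNval]
        field_simp
        ring

theorem verlinde_genus_two_sum (k : ℕ) :
    ∑ j ∈ Finset.Icc 1 (2 * k + 1),
        (-1 : ℝ) ^ (j - 1) / (Real.sin ((j : ℝ) * π / (2 * (k : ℝ) + 2))) ^ 2 =
      (2 * (k : ℝ) ^ 2 + 4 * (k : ℝ) + 3) / 3 := by
  have h := main_complex k
  have : ((∑ j ∈ Finset.Icc 1 (2 * k + 1),
      (-1 : ℝ) ^ (j - 1) / (Real.sin ((j : ℝ) * π / (2 * (k : ℝ) + 2))) ^ 2 : ℝ) : ℂ)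
      = (((2 * (k : ℝ) ^ 2 + 4 * (k : ℝ) + 3) / 3 : ℝ) : ℂ) := by
    push_cast
    exact h
  exact_mod_cast this
end

section
/- For every integer n ≥ 2, ∑_{j=1}^{n-1} 1/sin²(jπ/n) = (n² - 1)/3. -/
open Real

open Finset Complex in
private lemma L1 (n : ℕ) (z : ℂ) :
    (z - 1) ^ 2 * ∑ k ∈ range n, (k : ℂ) * z ^ k =
      ((n : ℂ) - 1) * z ^ (n + 1) - (n : ℂ) * z ^ n + z := by
  induction n with
  | zero => simp
  | succ n ih =>
    rw [Finset.sum_range_succ, mul_add, ih]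
    push_cast
    ring

open Finset Complex in
private lemma L2 (n : ℕ) (z : ℂ) :
    (z - 1) ^ 2 * ∑ k ∈ range n, (k : ℂ) * ((n : ℂ) - k) * z ^ k =
      ((n : ℂ) + 1) * z + ((n : ℂ) - 1) * z ^ (n + 1) - 2 * z ^ n + 2
        - 2 * ∑ k ∈ range n, z ^ k := by
  induction n with
  | zero => simp
  | succ n ih =>
    have h1 : ∑ k ∈ range (n + 1), (k : ℂ) * (((n + 1 : ℕ) : ℂ) - k) * z ^ k
        = ∑ k ∈ range (n + 1), ((k : ℂ) * ((n : ℂ) - k) * z ^ k + (k : ℂ) * z ^ k) :=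
      Finset.sum_congr rfl fun k _ => by push_cast; ring
    rw [h1, Finset.sum_add_distrib,
      Finset.sum_range_succ (f := fun k => (k : ℂ) * ((n : ℂ) - k) * z ^ k),
      Finset.sum_range_succ (f := fun k => z ^ k)]
    have hL1 := L1 (n + 1) z
    push_cast at hL1 ⊢
    linear_combination ih + hL1
  
open Finset Complex in
private lemma L3 (n : ℕ) : ∑ k ∈ range n, (k : ℂ) = ((n : ℂ) ^ 2 - n) / 2 := by
  induction n with
  | zero => simp
  | succ n ih =>
    rw [Finset.sum_range_succ, ih]
    push_cast
    ring

open Finset Complex in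
private lemma L4 (n : ℕ) :
    ∑ k ∈ range n, (k : ℂ) * ((n : ℂ) - k) = ((n : ℂ) ^ 3 - n) / 6 := by
  induction n with
  | zero => simp
  | succ n ih =>
    have h1 : ∑ k ∈ range (n + 1), (k : ℂ) * (((n + 1 : ℕ) : ℂ) - k)
        = ∑ k ∈ range (n + 1), ((k : ℂ) * ((n : ℂ) - k) + (k : ℂ)) :=
      Finset.sum_congr rfl fun k _ => by push_cast; ring
    rw [h1, Finset.sum_add_distrib,
      Finset.sum_range_succ (f := fun k => (k : ℂ) * ((n : ℂ) - k)), L3 (n + 1)]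
    push_cast at ih ⊢
    linear_combination ih

open Finset Complex in
/-- For z an n-th root of unity other than 1, `(z-1)^2 * ∑ k(n-k) z^k = 2 n z`. -/
private lemma L5 (n : ℕ) (z : ℂ) (hz : z ^ n = 1) (hz1 : z ≠ 1) :
    (z - 1) ^ 2 * ∑ k ∈ range n, (k : ℂ) * ((n : ℂ) - k) * z ^ k = 2 * n * z := by
  have hg : ∑ k ∈ range n, z ^ k = 0 := by
    rw [geom_sum_eq hz1, hz, sub_self, zero_div]
  rw [L2, hg, pow_succ, hz]
  ring

open Finset Complex in
/-- Pointwise identity: `1/sin²(jπ/n) = -(2/n) ∑ k(n-k) ζ^(jk)`. -/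
private lemma key (n : ℕ) (hn : 2 ≤ n) (j : ℕ) (hj1 : 1 ≤ j) (hj2 : j ≤ n - 1) :
    ((1 / (Real.sin ((j : ℝ) * π / (n : ℝ))) ^ 2 : ℝ) : ℂ) =
      -(2 / (n : ℂ)) * ∑ k ∈ range n,
        (k : ℂ) * ((n : ℂ) - k) * (Complex.exp (2 * π * I / n)) ^ (j * k) := by
  have hn0 : (n : ℝ) ≠ 0 := by positivity
  have hnC : (n : ℂ) ≠ 0 := by exact_mod_cast Nat.cast_ne_zero.mpr (by omega)
  set θ : ℝ := (j : ℝ) * π / n with hθ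
  have hθpos : 0 < θ := by
    apply div_pos (mul_pos (by exact_mod_cast hj1) Real.pi_pos)
    positivity
  have hθlt : θ < π := by
    rw [hθ, div_lt_iff₀ (by positivity)]
    have hjn : (j : ℝ) < n := by exact_mod_cast (by omega : j < n)
    nlinarith [Real.pi_pos]
  have hsin : Real.sin θ ≠ 0 := ne_of_gt (Real.sin_pos_of_pos_of_lt_pi hθpos hθlt)
  set ζ : ℂ := Complex.exp (2 * π * I / n) with hζdef
  have hprim : IsPrimitiveRoot ζ n := Complex.isPrimitiveRoot_exp n (by omega)
  set u : ℂ := Complex.exp (θ * I) with hu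
  have hu0 : u ≠ 0 := Complex.exp_ne_zero _
  set z : ℂ := u ^ 2 with hzdef
  have hzζ : z = ζ ^ j := by
    rw [hzdef, hu, hζdef, ← Complex.exp_nat_mul, ← Complex.exp_nat_mul]
    congr 1
    rw [hθ]
    push_cast
    field_simp
  have hzn : z ^ n = 1 := by
    rw [hzζ, ← pow_mul, mul_comm, pow_mul, hprim.pow_eq_one, one_pow]
  have hz1 : z ≠ 1 := by
    rw [hzζ, Ne, hprim.pow_eq_one_iff_dvd]
    intro h
    have := Nat.le_of_dvd (by omega) h
    omega
  -- relation between sin and u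
  have hI : I ^ 2 = -1 := Complex.I_sq
  have hi : u * u⁻¹ = 1 := mul_inv_cancel₀ hu0
  have hs2 : (Real.sin θ : ℂ) * (2 * I * u) = u ^ 2 - 1 := by
    rw [Complex.ofReal_sin]
    have h2s := Complex.two_sin (θ : ℂ)
    have hneg : Complex.exp (-(θ : ℂ) * I) = u⁻¹ := by
      rw [hu, ← Complex.exp_neg]; ring_nf
    rw [hneg, ← hu] at h2s
    linear_combination (I * u) * h2s + (-1 : ℂ) * hi + ((u⁻¹ - u) * u) * hI
  have hsinz : ((Real.sin θ : ℂ)) ^ 2 * (-4) * z = (z - 1) ^ 2 := by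
    rw [hzdef]
    linear_combination ((Real.sin θ : ℂ) * (2 * I * u) + (u ^ 2 - 1)) * hs2
      + (-4 * (Real.sin θ : ℂ) ^ 2 * u ^ 2) * hI
  have hT := L5 n z hzn hz1
  have hz10 : (z - 1) ≠ 0 := sub_ne_zero.mpr hz1
  have hsC : ((Real.sin θ : ℂ)) ≠ 0 := Complex.ofReal_ne_zero.mpr hsin
  have hz0 : z ≠ 0 := pow_ne_zero _ hu0
  have hsum : ∑ k ∈ range n, (k : ℂ) * ((n : ℂ) - k) * ζ ^ (j * k)
      = ∑ k ∈ range n, (k : ℂ) * ((n : ℂ) - k) * z ^ k :=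
    Finset.sum_congr rfl fun k _ => by rw [hzζ, ← pow_mul]
  rw [hsum]
  have hTval : ∑ k ∈ range n, (k : ℂ) * ((n : ℂ) - k) * z ^ k
      = 2 * n * z / (z - 1) ^ 2 := by
    field_simp
    linear_combination hT
  rw [hTval, ← hsinz, Complex.ofReal_div, Complex.ofReal_one, Complex.ofReal_pow]
  have h2 : u ^ 2 * u⁻¹ ^ 2 = 1 := by rw [← mul_pow, mul_inv_cancel₀ hu0, one_pow]
  have hsC' : Complex.sin (θ : ℂ) ≠ 0 := by rwa [← Complex.ofReal_sin]
  field_simp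
  norm_num

open Finset Complex in
theorem sum_inv_sin_sq (n : ℕ) (hn : 2 ≤ n) :
    ∑ j ∈ Finset.Icc 1 (n - 1), 1 / (Real.sin ((j : ℝ) * π / (n : ℝ))) ^ 2 =
      ((n : ℝ) ^ 2 - 1) / 3 := by
  have hnC : (n : ℂ) ≠ 0 := by exact_mod_cast Nat.cast_ne_zero.mpr (by omega)
  set ζ : ℂ := Complex.exp (2 * π * I / n) with hζdef
  have hprim : IsPrimitiveRoot ζ n := Complex.isPrimitiveRoot_exp n (by omega)
  apply Complex.ofReal_injective
  rw [Complex.ofReal_sum]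
  have hcalc : (∑ j ∈ Finset.Icc 1 (n - 1),
      ((1 / (Real.sin ((j : ℝ) * π / (n : ℝ))) ^ 2 : ℝ) : ℂ)) = ((n : ℂ) ^ 2 - 1) / 3 := by
    calc (∑ j ∈ Finset.Icc 1 (n - 1), ((1 / (Real.sin ((j : ℝ) * π / (n : ℝ))) ^ 2 : ℝ) : ℂ))
        = ∑ j ∈ Finset.Icc 1 (n - 1), -(2 / (n : ℂ)) * ∑ k ∈ range n,
            (k : ℂ) * ((n : ℂ) - k) * ζ ^ (j * k) := by
          refine Finset.sum_congr rfl fun j hj => ?_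
          rw [Finset.mem_Icc] at hj
          exact key n hn j hj.1 hj.2
      _ = -(2 / (n : ℂ)) * ∑ k ∈ range n, (k : ℂ) * ((n : ℂ) - k)
            * ∑ j ∈ Finset.Icc 1 (n - 1), (ζ ^ k) ^ j := by
          rw [← Finset.mul_sum, Finset.sum_comm]
          congr 1
          refine Finset.sum_congr rfl fun k _ => ?_
          rw [Finset.mul_sum]
          refine Finset.sum_congr rfl fun j _ => ?_
          rw [← pow_mul, mul_comm j k, pow_mul]
      _ = -(2 / (n : ℂ)) * ∑ k ∈ range n, (k : ℂ) * ((n : ℂ) - k) * (-1) := by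
          congr 1
          refine Finset.sum_congr rfl fun k hk => ?_
          rw [Finset.mem_range] at hk
          rcases Nat.eq_zero_or_pos k with hk0 | hk0
          · subst hk0; simp
          · have hζk1 : ζ ^ k ≠ 1 := by
              rw [Ne, hprim.pow_eq_one_iff_dvd]
              intro h
              have := Nat.le_of_dvd hk0 h
              omega
            have hζkn : (ζ ^ k) ^ n = 1 := by
              rw [← pow_mul, mul_comm, pow_mul, hprim.pow_eq_one, one_pow]
            have hIcc : Finset.Icc 1 (n - 1) = Finset.Ico 1 n := by
              rw [← Finset.Ico_add_one_right_eq_Icc]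
              congr 1
              omega
            have hrange : ∑ j ∈ range n, (ζ ^ k) ^ j = 0 := by
              rw [geom_sum_eq hζk1, hζkn, sub_self, zero_div]
            rw [Finset.range_eq_Ico,
              ← Finset.sum_Ico_consecutive _ (by omega : 0 ≤ 1) (by omega : 1 ≤ n)] at hrange
            have h0 : ∑ j ∈ Finset.Ico 0 1, (ζ ^ k) ^ j = 1 := by simp
            rw [h0] at hrange
            have hval : ∑ j ∈ Finset.Ico 1 n, (ζ ^ k) ^ j = -1 := by
              linear_combination hrange
            rw [hIcc, hval]
      _ = ((n : ℂ) ^ 2 - 1) / 3 := by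
          have hL : ∑ k ∈ range n, (k : ℂ) * ((n : ℂ) - k) * (-1)
              = -(((n : ℂ) ^ 3 - n) / 6) := by
            rw [← L4 n, ← Finset.sum_neg_distrib]
            exact Finset.sum_congr rfl fun k _ => by ring
          rw [hL]
          field_simp
          ring
  rw [hcalc]
  push_cast
  ring
end

section
/- With the matrix M(k) as above for g = 3, the expression 2³ · det M(k) / (2!·4!·6!) is a polynomial in k of degree 6 with rational coefficients whose value at k = 0 is 1, and it satisfies Q(k) = Q(-2-k) for all k. -/
open Polynomial

/-- The genus-`g` Verlinde matrix over ℚ: `M_{0,s} = 1` and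
`M_{r,s} = (k+1+r)^{2s+2} - (k+1-r)^{2s+2}` for `r ≥ 1`. -/
def verlindeMatrix (g : ℕ) (k : ℚ) : Matrix (Fin g) (Fin g) ℚ :=
  fun r s => if (r : ℕ) = 0 then 1
    else (k + 1 + (r : ℕ)) ^ (2 * (s : ℕ) + 2) - (k + 1 - (r : ℕ)) ^ (2 * (s : ℕ) + 2)

noncomputable def Qpoly : Polynomial ℚ :=
  C (14/45) * X^6 + C (28/15) * X^5 + C (46/9) * X^4 + C 8 * X^3
    + C (341/45) * X^2 + C (62/15) * X + C 1

lemma Qpoly_eval (k : ℚ) : Qpoly.eval k =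
    14/45 * k^6 + 28/15 * k^5 + 46/9 * k^4 + 8 * k^3 + 341/45 * k^2 + 62/15 * k + 1 := by
  simp [Qpoly]

theorem verlinde_genus_three_polynomial :
    ∃ Q : Polynomial ℚ,
      (∀ k : ℚ, Q.eval k =
          2 ^ 3 * (verlindeMatrix 3 k).det /
            ((Nat.factorial 2 : ℚ) * (Nat.factorial 4 : ℚ) * (Nat.factorial 6 : ℚ))) ∧
      Q.natDegree = 6 ∧ Q.eval 0 = 1 ∧ (∀ k : ℚ, Q.eval k = Q.eval (-2 - k)) := by
  refine ⟨Qpoly, ?_, ?_, ?_, ?_⟩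
  · intro k
    rw [Qpoly_eval, Matrix.det_fin_three]
    simp [verlindeMatrix, Fin.isValue, Nat.factorial]
    ring
  · unfold Qpoly
    compute_degree!
  · simp [Qpoly_eval]
  · intro k
    rw [Qpoly_eval, Qpoly_eval]
    ring
end
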